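/- Let g ∈ G with quadratic Lie algebra g. As bivector fields on the conjugacy class C through g, Σ_a R_a ∧ L_a = ½ Σ_{a,b} ((Ad_g+1)/(Ad_g−1)|_{g_g^⊥})_{ab} X_a ∧ X_b at the point g, where X_a = L_a − R_a and the operator (Ad_g+1)/(Ad_g−1)|_{g_g^⊥} is ((Ad_g+1)∘(Ad_g−1)^{-1}) composed with the orthogonal projection onto g_g^⊥. -/

import Mathlib

/-- For `g ∈ G` with quadratic Lie algebra `(L, B)` and `A = Ad_g` (a Lie
algebra automorphism preserving `B`), the right-trivialized identity of bivectors on the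
conjugacy class through `g` holds in `Λ²L`:
`Σ_a e_a ∧ A e_a = ½ Σ_{a,b} ((Ad_g+1)/(Ad_g−1)|_{g_g^⊥})_{ab} (A−1)e_a ∧ (A−1)e_b`,
where `X_a = L_a − R_a` trivializes to `(A−1)e_a` and `L_a` to `A e_a`.

`Pr` is the projection of `L` onto `W = (ker(A−1))^⊥` along `ker(A−1)`, and `Bop` is
`((Ad_g+1)∘(Ad_g−1)^{-1})∘Pr`, characterized by `(A−1)(Bop x) = (A+1)(Pr x)` with values
in `W`; its matrix entries in the orthonormal basis are `B (e a) (Bop (e b))`. -/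
theorem conjugacy_class_bivector_identity
    {L : Type*} [LieRing L] [LieAlgebra ℝ L] {n : ℕ}
    (B : LinearMap.BilinForm ℝ L) (hBsymm : B.IsSymm) (hBnd : B.Nondegenerate)
    (hBinv : ∀ x y z : L, B ⁅x, y⁆ z = B x ⁅y, z⁆)
    (e : Module.Basis (Fin n) ℝ L)
    (horth : ∀ a b, B (e a) (e b) = if a = b then 1 else 0)
    (A : L ≃ₗ[ℝ] L) (hAlie : ∀ x y : L, A ⁅x, y⁆ = ⁅A x, A y⁆)
    (hAorth : ∀ x y : L, B (A x) (A y) = B x y)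
    (Pr : L →ₗ[ℝ] L)
    (hPr1 : ∀ x : L, Pr x ∈ B.orthogonal (LinearMap.ker (A.toLinearMap - LinearMap.id)))
    (hPr2 : ∀ x : L, A (x - Pr x) = x - Pr x)
    (Bop : L →ₗ[ℝ] L)
    (hBopW : ∀ x : L, Bop x ∈ B.orthogonal (LinearMap.ker (A.toLinearMap - LinearMap.id)))
    (hBop : ∀ x : L, A (Bop x) - Bop x = A (Pr x) + Pr x) :
    ∑ a, ExteriorAlgebra.ι ℝ (e a) * ExteriorAlgebra.ι ℝ (A (e a))
      = (1/2 : ℝ) • ∑ a, ∑ b, (B (e a) (Bop (e b))) •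
          (ExteriorAlgebra.ι ℝ (A (e a) - e a) * ExteriorAlgebra.ι ℝ (A (e b) - e b)) := by
  classical
  set ι : L →ₗ[ℝ] ExteriorAlgebra ℝ L := ExteriorAlgebra.ι ℝ with hιdef
  have hsymm : ∀ x y : L, B x y = B y x := fun x y => hBsymm.eq x y
  have hrepr : ∀ (x : L) (a : Fin n), B (e a) x = e.repr x a := by
    intro x a
    conv_lhs => rw [← Module.Basis.sum_repr e x]
    simp only [map_sum, map_smul, smul_eq_mul, horth, mul_ite, mul_one, mul_zero, Finset.sum_ite_eq, Finset.sum_ite_eq', Finset.mem_univ, if_true]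
  have hexp : ∀ x : L, ∑ a, B (e a) x • e a = x := by
    intro x
    conv_rhs => rw [← Module.Basis.sum_repr e x]
    exact Finset.sum_congr rfl fun a _ => by rw [hrepr]
  set k : Fin n → L := fun a => e a - Pr (e a) with hk
  have hAk : ∀ a, A (k a) = k a := fun a => hPr2 (e a)
  have hkker : ∀ a, k a ∈ LinearMap.ker (A.toLinearMap - LinearMap.id) := by
    intro a
    simp [LinearMap.mem_ker, LinearMap.sub_apply, hAk a]
  have hBk : ∀ a b, B (e b) (k a) = B (k b) (e a) := by
    intro a b
    have h1 : B (k a) (Pr (e b)) = 0 := hPr1 (e b) _ (hkker a)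
    have h2 : B (k b) (Pr (e a)) = 0 := hPr1 (e a) _ (hkker b)
    have he : e b = k b + Pr (e b) := by simp [hk]
    have hea : k a = e a - Pr (e a) := rfl
    calc B (e b) (k a) = B (k b + Pr (e b)) (k a) := by rw [← he]
      _ = B (k b) (k a) + B (Pr (e b)) (k a) := by rw [map_add, LinearMap.add_apply]
      _ = B (k b) (k a) := by rw [hsymm (Pr (e b)) (k a), h1, add_zero]
      _ = B (k b) (e a) - B (k b) (Pr (e a)) := by rw [hea, map_sub]
      _ = B (k b) (e a) := by rw [h2, sub_zero]
  have hanti : ∀ x y : L, ι x * ι y = -(ι y * ι x) :=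
    fun x y => eq_neg_of_add_eq_zero_left (ExteriorAlgebra.ι_add_mul_swap x y)
  have hsq : ∀ x : L, ι x * ι x = 0 := fun x => ExteriorAlgebra.ι_sq_zero x
  -- collapse lemma
  have hcollapse : ∀ x : L, ∑ a, B (e a) x • (A (e a) - e a) = A x - x := by
    intro x
    have : ∀ a : Fin n, B (e a) x • (A (e a) - e a)
        = A (B (e a) x • e a) - B (e a) x • e a := by
      intro a; rw [map_smul, smul_sub]
    rw [Finset.sum_congr rfl fun a _ => this a, Finset.sum_sub_distrib, ← map_sum, hexp]
  have hCe : ∀ b, A (e b) - e b = A (Pr (e b)) - Pr (e b) := by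
    intro b
    have h := hPr2 (e b)
    rw [map_sub, sub_eq_sub_iff_add_eq_add] at h
    rw [sub_eq_sub_iff_add_eq_add, h, add_comm]
  -- RHS computation
  have hRHSinner : ∀ b : Fin n,
      ∑ a, (B (e a) (Bop (e b))) • (ι (A (e a) - e a) * ι (A (e b) - e b))
        = (2 : ℝ) • (ι (Pr (e b)) * ι (A (Pr (e b)))) := by
    intro b
    have step1 : ∑ a, (B (e a) (Bop (e b))) • (ι (A (e a) - e a) * ι (A (e b) - e b))
        = ι (∑ a, B (e a) (Bop (e b)) • (A (e a) - e a)) * ι (A (e b) - e b) := by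
      rw [map_sum]
      rw [Finset.sum_mul]
      exact Finset.sum_congr rfl fun a _ => by rw [map_smul, smul_mul_assoc]
    rw [step1, hcollapse, hBop, hCe]
    set u := A (Pr (e b)); set v := Pr (e b)
    rw [map_add, map_sub, add_mul, mul_sub, mul_sub, hsq, hsq]
    rw [hanti u v]
    rw [two_smul]
    abel
  -- LHS computation
  have hLHSterm : ∀ b : Fin n, ι (e b) * ι (A (e b))
      = ι (Pr (e b)) * ι (A (Pr (e b))) + ι (k b) * ι (A (e b) - e b) := by
    intro b
    have he : e b = Pr (e b) + k b := by simp [hk]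
    have hAe : A (e b) = A (Pr (e b)) + k b := by
      rw [← hAk b, ← map_add, ← he]
    calc ι (e b) * ι (A (e b)) = ι (Pr (e b) + k b) * ι (A (Pr (e b)) + k b) := by
          rw [← he, ← hAe]
      _ = ι (Pr (e b)) * ι (A (Pr (e b))) + ι (k b) * ι (A (Pr (e b)) - Pr (e b)) := by
          simp only [map_add, map_sub, add_mul, mul_add, sub_mul, mul_sub, hsq]
          rw [hanti (Pr (e b)) (k b)]
          abel
      _ = ι (Pr (e b)) * ι (A (Pr (e b))) + ι (k b) * ι (A (e b) - e b) := by
          rw [← hCe b]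
  have hS : ∑ b, ι (k b) * ι (A (e b) - e b) = 0 := by
    have step1 : ∀ b : Fin n, ι (k b) * ι (A (e b) - e b)
        = ∑ a, B (k a) (e b) • (ι (e a) * ι (A (e b) - e b)) := by
      intro b
      conv_lhs => rw [← hexp (k b)]
      rw [map_sum, Finset.sum_mul]
      refine Finset.sum_congr rfl fun a _ => ?_
      rw [map_smul, smul_mul_assoc, hBk b a]
    rw [Finset.sum_congr rfl fun b _ => step1 b, Finset.sum_comm]
    refine Finset.sum_eq_zero fun a _ => ?_
    have : ∑ b, B (k a) (e b) • (ι (e a) * ι (A (e b) - e b))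
        = ι (e a) * ι (∑ b, B (e b) (k a) • (A (e b) - e b)) := by
      rw [map_sum, Finset.mul_sum]
      exact Finset.sum_congr rfl fun b _ => by
        rw [map_smul, mul_smul_comm, hsymm (k a) (e b)]
    rw [this, hcollapse, hAk, sub_self, map_zero, mul_zero]
  calc ∑ a, ι (e a) * ι (A (e a))
      = ∑ b, (ι (Pr (e b)) * ι (A (Pr (e b))) + ι (k b) * ι (A (e b) - e b)) :=
        Finset.sum_congr rfl fun b _ => hLHSterm b
    _ = ∑ b, ι (Pr (e b)) * ι (A (Pr (e b))) + ∑ b, ι (k b) * ι (A (e b) - e b) :=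
        Finset.sum_add_distrib
    _ = ∑ b, ι (Pr (e b)) * ι (A (Pr (e b))) := by rw [hS, add_zero]
    _ = (1/2 : ℝ) • ∑ a, ∑ b, (B (e a) (Bop (e b))) •
          (ι (A (e a) - e a) * ι (A (e b) - e b)) := by
        rw [Finset.sum_comm]
        rw [Finset.sum_congr rfl fun b _ => hRHSinner b]
        rw [Finset.smul_sum]
        refine Finset.sum_congr rfl fun b _ => ?_
        rw [smul_smul]
        norm_num
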